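/- (GSIS under Bounded Unobservable Confounding, Proposition 2(i).) In the finite-horizon controlled hidden-state process, let λ^b be a full-history behavior policy and for each t, observed history h with P^{λ^b}(H^o_t = h) > 0, and action a define the marginalized behavior propensity λ̄^b_t(a|h) ≜ P^{λ^b}(A_t = a and H^o_t = h) / P^{λ^b}(H^o_t = h). Assume: (a) (overlap) the observed-history evaluation policy λ^e satisfies: λ^e_t(a|h) > 0 implies λ̄^b_t(a|h) > 0, for every t, every observed history h with positive probability under P^{λ^b}, and every a; (b) (bounded unobserved confounding) there exist constants η_t ≥ 1 such that for every full history h^u with positive probability under P^{λ^b}, with observed part h^o, and every action a with λ̄^b_t(a|h^o) > 0, η_t^{-1} ≤ λ^b_t(a|h^u)/λ̄^b_t(a|h^o) ≤ η_t. Then E_{P^{λ^b}}[ Γ_T · Π_{t=1}^T w̲_t ] ≤ E_{P^{λ^e}}[ Γ_T ] ≤ E_{P^{λ^b}}[ Γ_T · Π_{t=1}^T w̄_t ], where w_t(ω) = λ^e_t(a_t|H^o_t(ω)) / λ̄^b_t(a_t|H^o_t(ω)), w̲_t(ω) = w_t(ω)·(η_t^{-1}·1{Γ_T(ω)>0} +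 η_t·1{Γ_T(ω)<0}), and w̄_t(ω) = w_t(ω)·(η_t^{-1}·1{Γ_T(ω)<0} + η_t·1{Γ_T(ω)>0}). -/

import Mathlib

open scoped ENNReal

/-- A trajectory `ω = (s_1, o_1, a_1, …, s_T, o_T, a_T)`. -/
abbrev Traj (S O A : Type*) (T : ℕ) := Fin T → S × O × A

variable {S O A : Type*} {T : ℕ}

/-- Latent state at time `t`. -/
def trS (ω : Traj S O A T) (t : Fin T) : S := (ω t).1

/-- Observation at time `t`. -/
def trO (ω : Traj S O A T) (t : Fin T) : O := (ω t).2.1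

/-- Action at time `t`. -/
def trA (ω : Traj S O A T) (t : Fin T) : A := (ω t).2.2

/-- An observed history `(o_1, a_1, …, a_{t-1}, o_t)`: past (observation, action)
pairs together with the current observation. -/
abbrev ObsHist (O A : Type*) := List (O × A) × O

/-- Observed history of a trajectory at time `t`. -/
def obsHist (ω : Traj S O A T) (t : Fin T) : ObsHist O A :=
  (List.ofFn (fun i : Fin t.val =>
      (trO ω ⟨i.val, i.isLt.trans t.isLt⟩, trA ω ⟨i.val, i.isLt.trans t.isLt⟩)), trO ω t)

/-- An observed-history policy `λ = (λ_t)_t`. -/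
abbrev ObsPolicy (O A : Type*) (T : ℕ) := Fin T → ObsHist O A → PMF A

/-- Probability mass of a trajectory under sequential composition, with the action
probability factors given abstractly by `actProb`. -/
noncomputable def trajMass (hT : 0 < T) (ρ : PMF S) (q0 : S → PMF O)
    (p : S → A → PMF S) (q : S → A → PMF O)
    (actProb : Fin T → Traj S O A T → ℝ≥0∞) (ω : Traj S O A T) : ℝ≥0∞ :=
  ρ (trS ω ⟨0, hT⟩) * q0 (trS ω ⟨0, hT⟩) (trO ω ⟨0, hT⟩)
    * ∏ t : Fin T, actProb t ω
    * ∏ t : Fin T, (if h : t.val + 1 < T then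
        p (trS ω t) (trA ω t) (trS ω ⟨t.val + 1, h⟩)
          * q (trS ω ⟨t.val + 1, h⟩) (trA ω t) (trO ω ⟨t.val + 1, h⟩)
      else 1)

/-- Probability mass of a trajectory `ω` under an observed-history policy:
`P^λ(ω)`. -/
noncomputable def obsPolicyMass (hT : 0 < T) (ρ : PMF S) (q0 : S → PMF O)
    (p : S → A → PMF S) (q : S → A → PMF O)
    (lam : ObsPolicy O A T) (ω : Traj S O A T) : ℝ≥0∞ :=
  trajMass hT ρ q0 p q (fun t ω' => lam t (obsHist ω' t) (trA ω' t)) ω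

/-- Total discounted gain `Γ_T(ω) = Σ_t β^{t-1} g(s_t, a_t)`. -/
def discGain (β : ℝ) (g : S → A → ℝ) (ω : Traj S O A T) : ℝ :=
  ∑ t : Fin T, β ^ (t : ℕ) * g (trS ω t) (trA ω t)

/-- A full history `(s_1, o_1, a_1, …, s_t, o_t)`: past (state, observation, action)
triples together with the current state and observation. -/
abbrev FullHist (S O A : Type*) := List (S × O × A) × (S × O)

/-- Full history of a trajectory at time `t`. -/
def fullHist (ω : Traj S O A T) (t : Fin T) : FullHist S O A :=
  (List.ofFn (fun i : Fin t.val =>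
      (trS ω ⟨i.val, i.isLt.trans t.isLt⟩, trO ω ⟨i.val, i.isLt.trans t.isLt⟩,
        trA ω ⟨i.val, i.isLt.trans t.isLt⟩)),
    (trS ω t, trO ω t))

/-- The observed part of a full history. -/
def obsPart (h : FullHist S O A) : ObsHist O A :=
  (h.1.map fun x => (x.2.1, x.2.2), h.2.2)

/-- A full-history policy. -/
abbrev FullPolicy (S O A : Type*) (T : ℕ) := Fin T → FullHist S O A → PMF A

/-- Probability mass of a trajectory `ω` under a full-history policy. -/
noncomputable def fullPolicyMass (hT : 0 < T) (ρ : PMF S) (q0 : S → PMF O)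
    (p : S → A → PMF S) (q : S → A → PMF O)
    (lam : FullPolicy S O A T) (ω : Traj S O A T) : ℝ≥0∞ :=
  trajMass hT ρ q0 p q (fun t ω' => lam t (fullHist ω' t) (trA ω' t)) ω

variable [Fintype S] [Fintype O] [Fintype A]
variable [DecidableEq S] [DecidableEq O] [DecidableEq A]

/-- `P(H^o_t = h)` for a mass function on trajectories. -/
def probObsHist (mass : Traj S O A T → ℝ) (t : Fin T) (h : ObsHist O A) : ℝ :=
  ∑ ω : Traj S O A T, if obsHist ω t = h then mass ω else 0

/-- `P(A_t = a ∧ H^o_t = h)` for a mass function on trajectories. -/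
def probActObsHist (mass : Traj S O A T → ℝ) (t : Fin T) (a : A) (h : ObsHist O A) : ℝ :=
  ∑ ω : Traj S O A T, if obsHist ω t = h ∧ trA ω t = a then mass ω else 0

/-- The marginalized behavior propensity
`λ̄^b_t(a|h) = P(A_t = a ∧ H^o_t = h) / P(H^o_t = h)` (with `x/0 = 0`). -/
noncomputable def margProp (mass : Traj S O A T → ℝ) (t : Fin T) (a : A)
    (h : ObsHist O A) : ℝ :=
  probActObsHist mass t a h / probObsHist mass t h

/-- `P(H^u_t = h)` for a mass function on trajectories. -/
def probFullHist (mass : Traj S O A T → ℝ) (t : Fin T) (h : FullHist S O A) : ℝ :=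
  ∑ ω : Traj S O A T, if fullHist ω t = h then mass ω else 0

section Aux

variable {S O A : Type*} {T : ℕ}

lemma traj_eta (ω : Traj S O A T) (i : Fin T) : (trS ω i, trO ω i, trA ω i) = ω i := rfl

lemma fullHist_congr {ω' ω : Traj S O A T} {t : Fin T}
    (h1 : ∀ i : Fin T, i.val < t.val → ω' i = ω i)
    (h2 : trS ω' t = trS ω t) (h3 : trO ω' t = trO ω t) :
    fullHist ω' t = fullHist ω t := by
  unfold fullHist
  rw [h2, h3]
  congr 1
  exact congrArg List.ofFn (funext fun i => by
    simp only [trS, trO, trA, h1 ⟨i.val, i.isLt.trans t.isLt⟩ i.isLt])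

lemma obsPart_fullHist (ω : Traj S O A T) (t : Fin T) :
    obsPart (fullHist ω t) = obsHist ω t := by
  unfold obsPart fullHist obsHist
  simp [List.map_ofFn]
  rfl

/-- pick an element in the support of a PMF -/
noncomputable def pick {X : Type*} (μ : PMF X) : X := μ.support_nonempty.choose

lemma pick_spec {X : Type*} (μ : PMF X) : μ (pick μ) ≠ 0 := μ.support_nonempty.choose_spec

end Aux
section Wit

variable {S O A : Type*} [Nonempty S] [Nonempty O] [Nonempty A] {T : ℕ}

/-- Next triple in the witness construction. -/
noncomputable def nextTriple (p : S → A → PMF S) (q : S → A → PMF O)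
    (lamB : FullPolicy S O A T) (ω : Traj S O A T) (t : Fin T)
    (l : List (S × O × A)) : S × O × A :=
  let n := l.length
  let prev := l.getLastD (Classical.arbitrary _)
  let so : S × O :=
    if h : n ≤ t.val then
      (trS ω ⟨n, lt_of_le_of_lt h t.isLt⟩, trO ω ⟨n, lt_of_le_of_lt h t.isLt⟩)
    else (pick (p prev.1 prev.2.2),
      pick (q (pick (p prev.1 prev.2.2)) prev.2.2))
  let a : A :=
    if h : n < t.val then trA ω ⟨n, h.trans t.isLt⟩
    else if h2 : n < T then pick (lamB ⟨n, h2⟩ (l, so)) else Classical.arbitrary _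
  (so.1, so.2, a)

noncomputable def witList (p : S → A → PMF S) (q : S → A → PMF O)
    (lamB : FullPolicy S O A T) (ω : Traj S O A T) (t : Fin T) : ℕ → List (S × O × A)
  | 0 => []
  | n + 1 => witList p q lamB ω t n ++ [nextTriple p q lamB ω t (witList p q lamB ω t n)]

noncomputable def witTraj (p : S → A → PMF S) (q : S → A → PMF O)
    (lamB : FullPolicy S O A T) (ω : Traj S O A T) (t : Fin T) : Traj S O A T :=
  fun i => (witList p q lamB ω t T).getD i.val (Classical.arbitrary _)

variable (p : S → A → PMF S) (q : S → A → PMF O)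
    (lamB : FullPolicy S O A T) (ω : Traj S O A T) (t : Fin T)

lemma witList_length : ∀ n, (witList p q lamB ω t n).length = n := by
  intro n; induction n with
  | zero => rfl
  | succ n ih => simp [witList, ih]

lemma witList_getD {m n : ℕ} (h : n < m) (d : S × O × A) :
    (witList p q lamB ω t m).getD n d = nextTriple p q lamB ω t (witList p q lamB ω t n) := by
  induction m with
  | zero => omega
  | succ m ih =>
    rcases Nat.lt_or_ge n m with h' | h'
    · rw [witList, List.getD_append _ _ _ _ (by rw [witList_length]; exact h'), ih h']
    · have : n = m := by omega
      subst this
      rw [witList]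
      rw [List.getD_append_right _ _ _ _ (by rw [witList_length])]
      simp [witList_length]

lemma witTraj_eq (i : Fin T) :
    witTraj p q lamB ω t i = nextTriple p q lamB ω t (witList p q lamB ω t i.val) :=
  witList_getD p q lamB ω t i.isLt _

lemma witList_eq_ofFn {n : ℕ} (hn : n ≤ T) :
    witList p q lamB ω t n
      = List.ofFn (fun i : Fin n => witTraj p q lamB ω t ⟨i.val, lt_of_lt_of_le i.isLt hn⟩) := by
  induction n with
  | zero => rfl
  | succ n ih =>
    rw [witList, List.ofFn_succ', List.concat_eq_append]
    congr 1
    · exact ih (le_of_lt hn)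
    · rw [witTraj_eq]
      rfl

lemma witList_eq_fullHist (i : Fin T) :
    fullHist (witTraj p q lamB ω t) i
      = (witList p q lamB ω t i.val,
          (trS (witTraj p q lamB ω t) i, trO (witTraj p q lamB ω t) i)) := by
  unfold fullHist
  rw [witList_eq_ofFn p q lamB ω t (le_of_lt i.isLt)]
  rfl

end Wit
section Wit2

variable {S O A : Type*} [Nonempty S] [Nonempty O] [Nonempty A] {T : ℕ}
variable (p : S → A → PMF S) (q : S → A → PMF O)
    (lamB : FullPolicy S O A T) (ω : Traj S O A T) (t : Fin T)

lemma witTraj_S (i : Fin T) (hi : i.val ≤ t.val) :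
    trS (witTraj p q lamB ω t) i = trS ω i := by
  rw [trS, witTraj_eq]
  unfold nextTriple
  simp only [witList_length, dif_pos hi]

lemma witTraj_O (i : Fin T) (hi : i.val ≤ t.val) :
    trO (witTraj p q lamB ω t) i = trO ω i := by
  rw [trO, witTraj_eq]
  unfold nextTriple
  simp only [witList_length, dif_pos hi]

lemma witTraj_agree (i : Fin T) (hi : i.val < t.val) :
    witTraj p q lamB ω t i = ω i := by
  rw [witTraj_eq]
  unfold nextTriple
  simp only [witList_length, dif_pos (le_of_lt hi), dif_pos hi]
  rfl

lemma witTraj_fullHist_eq (i : Fin T) (hi : i.val ≤ t.val) :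
    fullHist (witTraj p q lamB ω t) i = fullHist ω i := by
  refine fullHist_congr (fun j hj => witTraj_agree p q lamB ω t j (lt_of_lt_of_le hj hi))
    (witTraj_S p q lamB ω t i hi) (witTraj_O p q lamB ω t i hi)

lemma witTraj_lamB_ne_zero (i : Fin T) (hi : t.val ≤ i.val) :
    lamB i (fullHist (witTraj p q lamB ω t) i) (trA (witTraj p q lamB ω t) i) ≠ 0 := by
  rw [witList_eq_fullHist, trA, trS, trO, witTraj_eq]
  unfold nextTriple
  simp only [witList_length, dif_neg (Nat.not_lt.2 hi), dif_pos i.isLt]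
  exact pick_spec _

lemma witTraj_trans (i : Fin T) (h : i.val + 1 < T) (hi : t.val ≤ i.val) :
    trS (witTraj p q lamB ω t) ⟨i.val+1, h⟩
        = pick (p (trS (witTraj p q lamB ω t) i) (trA (witTraj p q lamB ω t) i)) ∧
      trO (witTraj p q lamB ω t) ⟨i.val+1, h⟩
        = pick (q (pick (p (trS (witTraj p q lamB ω t) i) (trA (witTraj p q lamB ω t) i)))
            (trA (witTraj p q lamB ω t) i)) := by
  have hw : witList p q lamB ω t (i.val+1)
      = witList p q lamB ω t i.val ++ [nextTriple p q lamB ω t (witList p q lamB ω t i.val)] :=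
    rfl
  have he : witTraj p q lamB ω t ⟨i.val+1, h⟩
      = nextTriple p q lamB ω t (witList p q lamB ω t (i.val+1)) :=
    witTraj_eq p q lamB ω t ⟨i.val+1, h⟩
  simp only [trS, trO, trA, he, witTraj_eq p q lamB ω t i, hw]
  set x := nextTriple p q lamB ω t (witList p q lamB ω t i.val) with hx
  unfold nextTriple
  simp only [List.getLastD_concat, List.length_append, witList_length,
    List.length_cons, List.length_nil, dif_neg (by omega : ¬ (i.val + 1 ≤ t.val))]
  exact ⟨trivial, trivial⟩

end Wit2
section Wit3

variable {S O A : Type*} [Nonempty S] [Nonempty O] [Nonempty A] {T : ℕ}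
variable (p : S → A → PMF S) (q : S → A → PMF O)
    (lamB : FullPolicy S O A T) (ω : Traj S O A T) (t : Fin T)

lemma witTraj_mass_ne_zero (hT : 0 < T) (ρ : PMF S) (q0 : S → PMF O)
    (hρ : ρ (trS ω ⟨0, hT⟩) ≠ 0)
    (hq0 : q0 (trS ω ⟨0, hT⟩) (trO ω ⟨0, hT⟩) ≠ 0)
    (htr : ∀ (i : Fin T) (h : i.val + 1 < T),
      p (trS ω i) (trA ω i) (trS ω ⟨i.val+1, h⟩) ≠ 0 ∧
      q (trS ω ⟨i.val+1, h⟩) (trA ω i) (trO ω ⟨i.val+1, h⟩) ≠ 0)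
    (hIH : ∀ i : Fin T, i.val < t.val → lamB i (fullHist ω i) (trA ω i) ≠ 0) :
    fullPolicyMass hT ρ q0 p q lamB (witTraj p q lamB ω t) ≠ 0 := by
  unfold fullPolicyMass trajMass
  refine mul_ne_zero (mul_ne_zero ?_ ?_) ?_
  · rw [witTraj_S p q lamB ω t ⟨0, hT⟩ (Nat.zero_le _)]; exact hρ
  · rw [witTraj_S p q lamB ω t ⟨0, hT⟩ (Nat.zero_le _),
      witTraj_O p q lamB ω t ⟨0, hT⟩ (Nat.zero_le _)]; exact hq0
  rw [Finset.prod_ne_zero_iff]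
  intro i _
  refine mul_ne_zero ?_ ?_
  · rcases Nat.lt_or_ge i.val t.val with hi | hi
    · have ha : trA (witTraj p q lamB ω t) i = trA ω i := by
        rw [trA, trA, witTraj_agree p q lamB ω t i hi]
      show lamB i (fullHist (witTraj p q lamB ω t) i) (trA (witTraj p q lamB ω t) i) ≠ 0
      rw [witTraj_fullHist_eq p q lamB ω t i (le_of_lt hi), ha]
      exact hIH i hi
    · exact witTraj_lamB_ne_zero p q lamB ω t i hi
  rw [Finset.prod_ne_zero_iff]
  intro j _
  by_cases h : j.val + 1 < T
  · rw [dif_pos h]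
    rcases Nat.lt_or_ge j.val t.val with hj | hj
    · have h1 : trS (witTraj p q lamB ω t) j = trS ω j :=
        witTraj_S p q lamB ω t j (le_of_lt hj)
      have h2 : trA (witTraj p q lamB ω t) j = trA ω j := by
        rw [trA, trA, witTraj_agree p q lamB ω t j hj]
      have h3 : trS (witTraj p q lamB ω t) ⟨j.val+1, h⟩ = trS ω ⟨j.val+1, h⟩ :=
        witTraj_S p q lamB ω t ⟨j.val+1, h⟩ hj
      have h4 : trO (witTraj p q lamB ω t) ⟨j.val+1, h⟩ = trO ω ⟨j.val+1, h⟩ :=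
        witTraj_O p q lamB ω t ⟨j.val+1, h⟩ hj
      rw [h1, h2, h3, h4]
      exact mul_ne_zero (htr j h).1 (htr j h).2
    · obtain ⟨e1, e2⟩ := witTraj_trans p q lamB ω t j h hj
      rw [e1, e2]
      exact mul_ne_zero (pick_spec _) (pick_spec _)
  · rw [dif_neg h]; exact one_ne_zero

end Wit3
section Mass

variable {S O A : Type*} [Fintype S] [Fintype O] [Fintype A]
    [DecidableEq S] [DecidableEq O] [DecidableEq A] {T : ℕ}

lemma fullPolicyMass_ne_top (hT : 0 < T) (ρ : PMF S) (q0 : S → PMF O)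
    (p : S → A → PMF S) (q : S → A → PMF O) (lamB : FullPolicy S O A T)
    (ω : Traj S O A T) : fullPolicyMass hT ρ q0 p q lamB ω ≠ ⊤ := by
  unfold fullPolicyMass trajMass
  refine ENNReal.mul_ne_top (ENNReal.mul_ne_top (PMF.apply_ne_top _ _) (PMF.apply_ne_top _ _))
    (ENNReal.prod_ne_top fun i _ => ENNReal.mul_ne_top (PMF.apply_ne_top _ _)
      (ENNReal.prod_ne_top fun j _ => ?_))
  by_cases h : j.val + 1 < T
  · rw [dif_pos h]; exact ENNReal.mul_ne_top (PMF.apply_ne_top _ _) (PMF.apply_ne_top _ _)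
  · rw [dif_neg h]; exact ENNReal.one_ne_top

lemma probFullHist_pos (mass : Traj S O A T → ℝ) (hm : ∀ ω, 0 ≤ mass ω)
    (t : Fin T) (ω0 : Traj S O A T) (h0 : 0 < mass ω0) :
    0 < probFullHist mass t (fullHist ω0 t) := by
  unfold probFullHist
  calc (0:ℝ) < mass ω0 := h0
  _ = if fullHist ω0 t = fullHist ω0 t then mass ω0 else 0 := by rw [if_pos rfl]
  _ ≤ _ := Finset.single_le_sum (f := fun ω => if fullHist ω t = fullHist ω0 t then mass ω else 0)
      (fun ω _ => by split <;> simp [hm ω]) (Finset.mem_univ ω0)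

lemma probObsHist_pos (mass : Traj S O A T → ℝ) (hm : ∀ ω, 0 ≤ mass ω)
    (t : Fin T) (ω0 : Traj S O A T) (h0 : 0 < mass ω0) (h1 : ObsHist O A)
    (he : obsHist ω0 t = h1) :
    0 < probObsHist mass t h1 := by
  unfold probObsHist
  calc (0:ℝ) < mass ω0 := h0
  _ = if obsHist ω0 t = h1 then mass ω0 else 0 := by rw [if_pos he]
  _ ≤ _ := Finset.single_le_sum (f := fun ω => if obsHist ω t = h1 then mass ω else 0)
      (fun ω _ => by split <;> simp [hm ω]) (Finset.mem_univ ω0)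

end Mass
section Key

variable {S O A : Type*} [Fintype S] [Fintype O] [Fintype A]
    [Nonempty S] [Nonempty O] [Nonempty A]
    [DecidableEq S] [DecidableEq O] [DecidableEq A] {T : ℕ}

lemma key_claims (hT : 0 < T)
    (ρ : PMF S) (q0 : S → PMF O) (p : S → A → PMF S) (q : S → A → PMF O)
    (lamB : FullPolicy S O A T) (lamE : ObsPolicy O A T)
    (η : Fin T → ℝ) (hη : ∀ t, 1 ≤ η t)
    (hoverlap : ∀ (t : Fin T) (h : ObsHist O A) (a : A),
      0 < probObsHist (fun ω => (fullPolicyMass hT ρ q0 p q lamB ω).toReal) t h →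
      0 < ((lamE t h) a).toReal →
      0 < margProp (fun ω => (fullPolicyMass hT ρ q0 p q lamB ω).toReal) t a h)
    (hBUC : ∀ (t : Fin T) (hu : FullHist S O A) (a : A),
      0 < probFullHist (fun ω => (fullPolicyMass hT ρ q0 p q lamB ω).toReal) t hu →
      0 < margProp (fun ω => (fullPolicyMass hT ρ q0 p q lamB ω).toReal) t a (obsPart hu) →
      (η t)⁻¹ ≤ ((lamB t hu) a).toReal /
            margProp (fun ω => (fullPolicyMass hT ρ q0 p q lamB ω).toReal) t a (obsPart hu) ∧
        ((lamB t hu) a).toReal /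
            margProp (fun ω => (fullPolicyMass hT ρ q0 p q lamB ω).toReal) t a (obsPart hu)
          ≤ η t)
    (ω : Traj S O A T)
    (hρ : ρ (trS ω ⟨0, hT⟩) ≠ 0)
    (hq0 : q0 (trS ω ⟨0, hT⟩) (trO ω ⟨0, hT⟩) ≠ 0)
    (htr : ∀ (i : Fin T) (h : i.val + 1 < T),
      p (trS ω i) (trA ω i) (trS ω ⟨i.val+1, h⟩) ≠ 0 ∧
      q (trS ω ⟨i.val+1, h⟩) (trA ω i) (trO ω ⟨i.val+1, h⟩) ≠ 0)
    (he : ∀ i : Fin T, lamE i (obsHist ω i) (trA ω i) ≠ 0) :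
    ∀ t : Fin T,
      0 < margProp (fun ω' => (fullPolicyMass hT ρ q0 p q lamB ω').toReal) t (trA ω t)
          (obsHist ω t) ∧
      (η t)⁻¹ ≤ (lamB t (fullHist ω t) (trA ω t)).toReal /
          margProp (fun ω' => (fullPolicyMass hT ρ q0 p q lamB ω').toReal) t (trA ω t)
            (obsHist ω t) ∧
      (lamB t (fullHist ω t) (trA ω t)).toReal /
          margProp (fun ω' => (fullPolicyMass hT ρ q0 p q lamB ω').toReal) t (trA ω t)
            (obsHist ω t) ≤ η t ∧
      lamB t (fullHist ω t) (trA ω t) ≠ 0 := by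
  set mB := fun ω' => (fullPolicyMass hT ρ q0 p q lamB ω').toReal with hmB
  suffices H : ∀ n, ∀ t : Fin T, t.val < n →
      0 < margProp mB t (trA ω t) (obsHist ω t) ∧
      (η t)⁻¹ ≤ (lamB t (fullHist ω t) (trA ω t)).toReal /
          margProp mB t (trA ω t) (obsHist ω t) ∧
      (lamB t (fullHist ω t) (trA ω t)).toReal /
          margProp mB t (trA ω t) (obsHist ω t) ≤ η t ∧
      lamB t (fullHist ω t) (trA ω t) ≠ 0 by
    exact fun t => H T t t.isLt
  intro n
  induction n with
  | zero => exact fun t ht => absurd ht (Nat.not_lt_zero _)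
  | succ n ih =>
    intro t ht
    have hIH : ∀ i : Fin T, i.val < t.val → lamB i (fullHist ω i) (trA ω i) ≠ 0 :=
      fun i hi => (ih i (by omega)).2.2.2
    have hwit := witTraj_mass_ne_zero p q lamB ω t hT ρ q0 hρ hq0 htr hIH
    have hwitpos : 0 < mB (witTraj p q lamB ω t) :=
      ENNReal.toReal_pos hwit (fullPolicyMass_ne_top hT ρ q0 p q lamB _)
    have hfull : fullHist (witTraj p q lamB ω t) t = fullHist ω t :=
      witTraj_fullHist_eq p q lamB ω t t (le_refl _)
    have hobs : obsHist (witTraj p q lamB ω t) t = obsHist ω t := by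
      rw [← obsPart_fullHist, hfull, obsPart_fullHist]
    have hPfull : 0 < probFullHist mB t (fullHist ω t) := by
      rw [← hfull]
      exact probFullHist_pos mB (fun _ => ENNReal.toReal_nonneg) t _ hwitpos
    have hPobs : 0 < probObsHist mB t (obsHist ω t) :=
      probObsHist_pos mB (fun _ => ENNReal.toReal_nonneg) t _ hwitpos _ hobs
    have hE : 0 < (lamE t (obsHist ω t) (trA ω t)).toReal :=
      ENNReal.toReal_pos (he t) (PMF.apply_ne_top _ _)
    have hmarg : 0 < margProp mB t (trA ω t) (obsHist ω t) := hoverlap t _ _ hPobs hE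
    have hb := hBUC t (fullHist ω t) (trA ω t) hPfull
      (by rw [obsPart_fullHist]; exact hmarg)
    rw [obsPart_fullHist] at hb
    refine ⟨hmarg, hb.1, hb.2, ?_⟩
    have hinv : (0:ℝ) < (η t)⁻¹ := inv_pos.2 (lt_of_lt_of_le one_pos (hη t))
    have hdiv : 0 < (lamB t (fullHist ω t) (trA ω t)).toReal /
        margProp mB t (trA ω t) (obsHist ω t) := lt_of_lt_of_le hinv hb.1
    have hnum : 0 < (lamB t (fullHist ω t) (trA ω t)).toReal := by
      have := mul_pos hdiv hmarg
      rwa [div_mul_cancel₀ _ (ne_of_gt hmarg)] at this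
    intro h0
    rw [h0] at hnum
    simp at hnum
end Key
section Alg

variable {S O A : Type*} [Fintype S] [Fintype O] [Fintype A]
    [DecidableEq S] [DecidableEq O] [DecidableEq A] {T : ℕ}

lemma merge_prod (a b x : ℝ) (u v : Fin T → ℝ) :
    (a * b * ∏ t, u t) * (x * ∏ t, v t) = a * b * x * ∏ t, (u t * v t) := by
  rw [Finset.prod_mul_distrib]; ring

lemma expand_eq (hT : 0 < T) (ρ : PMF S) (q0 : S → PMF O)
    (p : S → A → PMF S) (q : S → A → PMF O)
    (lamB : FullPolicy S O A T) (lamE : ObsPolicy O A T) (ω : Traj S O A T)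
    (x : ℝ) (c d : Fin T → ℝ) :
    (fullPolicyMass hT ρ q0 p q lamB ω).toReal *
        (x * ∏ t, ((lamE t (obsHist ω t) (trA ω t)).toReal / d t) * c t)
      = (obsPolicyMass hT ρ q0 p q lamE ω).toReal *
        (x * ∏ t, ((lamB t (fullHist ω t) (trA ω t)).toReal / d t) * c t) := by
  simp only [fullPolicyMass, obsPolicyMass, trajMass, ENNReal.toReal_mul, ENNReal.toReal_prod]
  rw [merge_prod, merge_prod]
  exact congrArg _ (Finset.prod_congr rfl fun t _ => by ring)

lemma prod_bound (Γ mE : ℝ) (hmE : 0 ≤ mE) (η r : Fin T → ℝ) (hη : ∀ t, 1 ≤ η t)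
    (hr1 : ∀ t, (η t)⁻¹ ≤ r t) (hr2 : ∀ t, r t ≤ η t) :
    mE * (Γ * ∏ t, r t *
        ((η t)⁻¹ * (if 0 < Γ then (1:ℝ) else 0) + η t * (if Γ < 0 then (1:ℝ) else 0)))
      ≤ mE * Γ ∧
    mE * Γ ≤ mE * (Γ * ∏ t, r t *
        ((η t)⁻¹ * (if Γ < 0 then (1:ℝ) else 0) + η t * (if 0 < Γ then (1:ℝ) else 0))) := by
  have hη0 : ∀ t, (0:ℝ) < η t := fun t => lt_of_lt_of_le one_pos (hη t)
  have hlow : ∀ t, r t * (η t)⁻¹ ≤ 1 := fun t => by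
    have := mul_le_mul_of_nonneg_right (hr2 t) (le_of_lt (inv_pos.2 (hη0 t)))
    rwa [mul_inv_cancel₀ (ne_of_gt (hη0 t))] at this
  have hlow0 : ∀ t, (0:ℝ) ≤ r t * (η t)⁻¹ := fun t =>
    mul_nonneg (le_trans (le_of_lt (inv_pos.2 (hη0 t))) (hr1 t))
      (le_of_lt (inv_pos.2 (hη0 t)))
  have hhigh : ∀ t, (1:ℝ) ≤ r t * η t := fun t => by
    have := mul_le_mul_of_nonneg_right (hr1 t) (le_of_lt (hη0 t))
    rwa [inv_mul_cancel₀ (ne_of_gt (hη0 t))] at this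
  rcases lt_trichotomy Γ 0 with hΓ | hΓ | hΓ
  · simp only [if_pos hΓ, if_neg (asymm hΓ), mul_zero, mul_one, zero_add, add_zero]
    constructor
    · refine mul_le_mul_of_nonneg_left ?_ hmE
      have h1 : (1:ℝ) ≤ ∏ t, r t * η t :=
        by
        calc (1:ℝ) = ∏ _t : Fin T, 1 := by rw [Finset.prod_const_one]
        _ ≤ ∏ t, r t * η t :=
          Finset.prod_le_prod (fun _ _ => zero_le_one) (fun t _ => hhigh t)
      calc Γ * ∏ t, r t * η t ≤ Γ * 1 := mul_le_mul_of_nonpos_left h1 (le_of_lt hΓ)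
      _ = Γ := mul_one Γ
    · refine mul_le_mul_of_nonneg_left ?_ hmE
      have h1 : ∏ t, r t * (η t)⁻¹ ≤ 1 :=
        Finset.prod_le_one (fun t _ => hlow0 t) (fun t _ => hlow t)
      calc Γ = Γ * 1 := (mul_one Γ).symm
      _ ≤ Γ * ∏ t, r t * (η t)⁻¹ := mul_le_mul_of_nonpos_left h1 (le_of_lt hΓ)
  · simp [hΓ]
  · simp only [if_pos hΓ, if_neg (asymm hΓ), mul_zero, mul_one, zero_add, add_zero]
    constructor
    · refine mul_le_mul_of_nonneg_left ?_ hmE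
      have h1 : ∏ t, r t * (η t)⁻¹ ≤ 1 :=
        Finset.prod_le_one (fun t _ => hlow0 t) (fun t _ => hlow t)
      calc Γ * ∏ t, r t * (η t)⁻¹ ≤ Γ * 1 :=
        mul_le_mul_of_nonneg_left h1 (le_of_lt hΓ)
      _ = Γ := mul_one Γ
    · refine mul_le_mul_of_nonneg_left ?_ hmE
      have h1 : (1:ℝ) ≤ ∏ t, r t * η t :=
        by
        calc (1:ℝ) = ∏ _t : Fin T, 1 := by rw [Finset.prod_const_one]
        _ ≤ ∏ t, r t * η t :=
          Finset.prod_le_prod (fun _ _ => zero_le_one) (fun t _ => hhigh t)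
      calc Γ = Γ * 1 := (mul_one Γ).symm
      _ ≤ Γ * ∏ t, r t * η t := mul_le_mul_of_nonneg_left h1 (le_of_lt hΓ)

end Alg
/-- GSIS under Bounded Unobservable Confounding, Proposition 2(i):
under overlap of `λ^e` with the marginalized behavior propensities and bounded
unobserved confounding with constants `η_t ≥ 1`,
`E_{P^{λ^b}}[Γ_T · Π_t w̲_t] ≤ E_{P^{λ^e}}[Γ_T] ≤ E_{P^{λ^b}}[Γ_T · Π_t w̄_t]`. -/
theorem gsis_bounded_unobservable_confounding
    {S O A : Type*} [Fintype S] [Fintype O] [Fintype A]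
    [Nonempty S] [Nonempty O] [Nonempty A]
    [DecidableEq S] [DecidableEq O] [DecidableEq A] {T : ℕ} (hT : 0 < T)
    (ρ : PMF S) (q0 : S → PMF O) (p : S → A → PMF S) (q : S → A → PMF O)
    (lamB : FullPolicy S O A T) (lamE : ObsPolicy O A T)
    (g : S → A → ℝ) (β : ℝ) (hβ0 : 0 ≤ β) (hβ1 : β < 1)
    (η : Fin T → ℝ) (hη : ∀ t, 1 ≤ η t)
    (hoverlap : ∀ (t : Fin T) (h : ObsHist O A) (a : A),
      0 < probObsHist (fun ω => (fullPolicyMass hT ρ q0 p q lamB ω).toReal) t h →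
      0 < ((lamE t h) a).toReal →
      0 < margProp (fun ω => (fullPolicyMass hT ρ q0 p q lamB ω).toReal) t a h)
    (hBUC : ∀ (t : Fin T) (hu : FullHist S O A) (a : A),
      0 < probFullHist (fun ω => (fullPolicyMass hT ρ q0 p q lamB ω).toReal) t hu →
      0 < margProp (fun ω => (fullPolicyMass hT ρ q0 p q lamB ω).toReal) t a (obsPart hu) →
      (η t)⁻¹ ≤ ((lamB t hu) a).toReal /
            margProp (fun ω => (fullPolicyMass hT ρ q0 p q lamB ω).toReal) t a (obsPart hu) ∧
        ((lamB t hu) a).toReal /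
            margProp (fun ω => (fullPolicyMass hT ρ q0 p q lamB ω).toReal) t a (obsPart hu)
          ≤ η t) :
    (∑ ω : Traj S O A T, (fullPolicyMass hT ρ q0 p q lamB ω).toReal *
        (discGain β g ω * ∏ t : Fin T,
          (((lamE t (obsHist ω t)) (trA ω t)).toReal /
              margProp (fun ω' => (fullPolicyMass hT ρ q0 p q lamB ω').toReal) t
                (trA ω t) (obsHist ω t)) *
            ((η t)⁻¹ * (if 0 < discGain β g ω then (1 : ℝ) else 0) +
              η t * (if discGain β g ω < 0 then (1 : ℝ) else 0)))
      ≤ ∑ ω : Traj S O A T,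
          (obsPolicyMass hT ρ q0 p q lamE ω).toReal * discGain β g ω) ∧
    (∑ ω : Traj S O A T, (obsPolicyMass hT ρ q0 p q lamE ω).toReal * discGain β g ω
      ≤ ∑ ω : Traj S O A T, (fullPolicyMass hT ρ q0 p q lamB ω).toReal *
          (discGain β g ω * ∏ t : Fin T,
            (((lamE t (obsHist ω t)) (trA ω t)).toReal /
                margProp (fun ω' => (fullPolicyMass hT ρ q0 p q lamB ω').toReal) t
                  (trA ω t) (obsHist ω t)) *
              ((η t)⁻¹ * (if discGain β g ω < 0 then (1 : ℝ) else 0) +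
                η t * (if 0 < discGain β g ω then (1 : ℝ) else 0)))) := by

  have main : ∀ ω : Traj S O A T,
      (fullPolicyMass hT ρ q0 p q lamB ω).toReal *
        (discGain β g ω * ∏ t : Fin T,
          (((lamE t (obsHist ω t)) (trA ω t)).toReal /
              margProp (fun ω' => (fullPolicyMass hT ρ q0 p q lamB ω').toReal) t
                (trA ω t) (obsHist ω t)) *
            ((η t)⁻¹ * (if 0 < discGain β g ω then (1 : ℝ) else 0) +
              η t * (if discGain β g ω < 0 then (1 : ℝ) else 0)))
        ≤ (obsPolicyMass hT ρ q0 p q lamE ω).toReal * discGain β g ω ∧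
      (obsPolicyMass hT ρ q0 p q lamE ω).toReal * discGain β g ω
        ≤ (fullPolicyMass hT ρ q0 p q lamB ω).toReal *
          (discGain β g ω * ∏ t : Fin T,
            (((lamE t (obsHist ω t)) (trA ω t)).toReal /
                margProp (fun ω' => (fullPolicyMass hT ρ q0 p q lamB ω').toReal) t
                  (trA ω t) (obsHist ω t)) *
              ((η t)⁻¹ * (if discGain β g ω < 0 then (1 : ℝ) else 0) +
                η t * (if 0 < discGain β g ω then (1 : ℝ) else 0))) := by
    intro ω
    by_cases hmE0 : obsPolicyMass hT ρ q0 p q lamE ω = 0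
    · have hmE0' := hmE0
      unfold obsPolicyMass trajMass at hmE0'
      beta_reduce at hmE0'
      rcases mul_eq_zero.1 hmE0' with h12 | hP
      · have hB : fullPolicyMass hT ρ q0 p q lamB ω = 0 := by
          unfold fullPolicyMass trajMass
          rw [h12, zero_mul]
        simp [hB, hmE0]
      · obtain ⟨t0, _, h0⟩ := Finset.prod_eq_zero_iff.1 hP
        rcases mul_eq_zero.1 h0 with he0 | hP0
        · have h2 : ∀ cf : Fin T → ℝ,
              ∏ t : Fin T, (((lamE t (obsHist ω t)) (trA ω t)).toReal /
                margProp (fun ω' => (fullPolicyMass hT ρ q0 p q lamB ω').toReal) t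
                  (trA ω t) (obsHist ω t)) * cf t = 0 := fun cf =>
            Finset.prod_eq_zero (Finset.mem_univ t0) (by rw [he0]; simp)
          constructor
          · rw [h2 (fun t => (η t)⁻¹ * (if 0 < discGain β g ω then (1 : ℝ) else 0) +
                η t * (if discGain β g ω < 0 then (1 : ℝ) else 0)), hmE0]
            simp
          · rw [h2 (fun t => (η t)⁻¹ * (if discGain β g ω < 0 then (1 : ℝ) else 0) +
                η t * (if 0 < discGain β g ω then (1 : ℝ) else 0)), hmE0]
            simp
        · have hB : fullPolicyMass hT ρ q0 p q lamB ω = 0 := by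
            unfold fullPolicyMass trajMass
            rw [Finset.prod_eq_zero (Finset.mem_univ (⟨0, hT⟩ : Fin T))
              (by rw [hP0, mul_zero]), mul_zero]
          simp [hB, hmE0]
    · have hmE0' := hmE0
      unfold obsPolicyMass trajMass at hmE0'
      beta_reduce at hmE0'
      rcases mul_ne_zero_iff.1 hmE0' with ⟨h12, hP⟩
      rcases mul_ne_zero_iff.1 h12 with ⟨hρ0, hq00⟩
      have hfac := Finset.prod_ne_zero_iff.1 hP
      have he : ∀ i : Fin T, lamE i (obsHist ω i) (trA ω i) ≠ 0 := fun i =>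
        (mul_ne_zero_iff.1 (hfac i (Finset.mem_univ i))).1
      have hPne := (mul_ne_zero_iff.1 (hfac ⟨0, hT⟩ (Finset.mem_univ _))).2
      have htr : ∀ (i : Fin T) (h : i.val + 1 < T),
          p (trS ω i) (trA ω i) (trS ω ⟨i.val+1, h⟩) ≠ 0 ∧
          q (trS ω ⟨i.val+1, h⟩) (trA ω i) (trO ω ⟨i.val+1, h⟩) ≠ 0 := by
        intro i h
        have := Finset.prod_ne_zero_iff.1 hPne i (Finset.mem_univ i)
        rw [dif_pos h] at this
        exact mul_ne_zero_iff.1 this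
      have K := key_claims hT ρ q0 p q lamB lamE η hη hoverlap hBUC ω hρ0 hq00 htr he
      have PB := prod_bound (discGain β g ω) (obsPolicyMass hT ρ q0 p q lamE ω).toReal
        ENNReal.toReal_nonneg η
        (fun t => (lamB t (fullHist ω t) (trA ω t)).toReal /
          margProp (fun ω' => (fullPolicyMass hT ρ q0 p q lamB ω').toReal) t
            (trA ω t) (obsHist ω t))
        hη (fun t => (K t).2.1) (fun t => (K t).2.2.1)
      constructor
      · exact le_trans (le_of_eq (expand_eq hT ρ q0 p q lamB lamE ω (discGain β g ω)
          (fun t => (η t)⁻¹ * (if 0 < discGain β g ω then (1 : ℝ) else 0) +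
            η t * (if discGain β g ω < 0 then (1 : ℝ) else 0))
          (fun t => margProp (fun ω' => (fullPolicyMass hT ρ q0 p q lamB ω').toReal) t
            (trA ω t) (obsHist ω t)))) PB.1
      · exact le_trans PB.2 (le_of_eq (expand_eq hT ρ q0 p q lamB lamE ω (discGain β g ω)
          (fun t => (η t)⁻¹ * (if discGain β g ω < 0 then (1 : ℝ) else 0) +
            η t * (if 0 < discGain β g ω then (1 : ℝ) else 0))
          (fun t => margProp (fun ω' => (fullPolicyMass hT ρ q0 p q lamB ω').toReal) t
            (trA ω t) (obsHist ω t))).symm)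
  exact ⟨Finset.sum_le_sum fun ω _ => (main ω).1, Finset.sum_le_sum fun ω _ => (main ω).2⟩
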